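/- Let X be a metrizable space, Y a topological space and (Z, λ) a locally convex equiconnected space. Let f : X × Y → Z be such that the map x ↦ f(x,y) is continuous for every y ∈ Y and the set {x ∈ X : the map y ↦ f(x,y) is continuous} is dense in X. Then f is the pointwise limit of a sequence of continuous maps X × Y → Z. -/

import Mathlib

open Set Function Filter Topology

universe u

/-- An *equiconnecting* map on `Z`: a map `λ : Z × Z × [0,1] → Z`, continuous on
`Z × Z × [0,1]`, with `λ(x,y,0) = x`, `λ(x,y,1) = y` and `λ(x,x,t) = x`. -/
structure IsEquiconnecting {Z : Type*} [TopologicalSpace Z] (lam : Z → Z → ℝ → Z) : Prop where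
  continuousOn : ContinuousOn (fun p : Z × Z × ℝ => lam p.1 p.2.1 p.2.2)
    (Set.univ ×ˢ Set.univ ×ˢ Set.Icc (0 : ℝ) 1)
  map_zero : ∀ x y : Z, lam x y 0 = x
  map_one : ∀ x y : Z, lam x y 1 = y
  map_diag : ∀ x : Z, ∀ t ∈ Set.Icc (0 : ℝ) 1, lam x x t = x

/-- `lambdaIter lam n` is the map `λ_{n+1} : Z^{n+1} × S_{n+1} → Z` from the paper,
defined recursively. -/
noncomputable def lambdaIter {Z : Type*} (lam : Z → Z → ℝ → Z) :
    (n : ℕ) → (Fin (n + 1) → Z) → (Fin (n + 1) → ℝ) → Z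
  | 0, x, _ => x 0
  | n + 1, x, a =>
      if 0 < a 0 + a 1 then
        lambdaIter lam n
          (Fin.cons (lam (x 0) (x 1) (a 1 / (a 0 + a 1))) fun i => x i.succ.succ)
          (Fin.cons (a 0 + a 1) fun i => a i.succ.succ)
      else
        lambdaIter lam n (fun i => x i.succ) fun i => a i.succ

/-- `lambdaIterSet lam A n` is the set `λ^n(A)`:  `λ^0(A) = A` and
`λ^{n+1}(A) = λ(λ^n(A) × A × [0,1])`. -/
def lambdaIterSet {Z : Type*} (lam : Z → Z → ℝ → Z) (A : Set Z) : ℕ → Set Z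
  | 0 => A
  | n + 1 => (fun p : Z × Z × ℝ => lam p.1 p.2.1 p.2.2) ''
      (lambdaIterSet lam A n ×ˢ A ×ˢ Set.Icc (0 : ℝ) 1)

/-- `λ^∞(A) = ⋃_{n ≥ 1} λ^n(A)`. -/
def lambdaInftySet {Z : Type*} (lam : Z → Z → ℝ → Z) (A : Set Z) : Set Z :=
  ⋃ n : ℕ, lambdaIterSet lam A (n + 1)

/-- An equiconnected space `(Z, λ)` is locally convex if every point has arbitrarily small
neighborhoods `V` with `λ^∞(V)` inside a given neighborhood. -/
def IsLocallyConvexEquiconnected {Z : Type*} [TopologicalSpace Z] (lam : Z → Z → ℝ → Z) :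
    Prop :=
  ∀ z : Z, ∀ U ∈ nhds z, ∃ V ∈ nhds z, lambdaInftySet lam V ⊆ U

/-- A map is Baire-one if it is the pointwise limit of a sequence of continuous maps. -/
def BaireOne {Y Z : Type*} [TopologicalSpace Y] [TopologicalSpace Z] (g : Y → Z) : Prop :=
  ∃ h : ℕ → Y → Z, (∀ n, Continuous (h n)) ∧
    ∀ y, Filter.Tendsto (fun n => h n y) Filter.atTop (nhds (g y))

/-- A locally finite partition of unity on `X`: continuous `[0,1]`-valued functions whose
supports (closures of the sets where they are nonzero) form a locally finite family and whose
pointwise sum is `1`. -/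
def IsLocFinPartitionOfUnity {I X : Type*} [TopologicalSpace X] (φ : I → X → ℝ) : Prop :=
  (∀ i, Continuous (φ i)) ∧ (∀ i x, φ i x ∈ Set.Icc (0 : ℝ) 1) ∧
    (LocallyFinite fun i => closure (Function.support (φ i))) ∧ ∀ x, ∑ᶠ i, φ i x = 1

/-- A strong PP-space: for every dense `D ⊆ X` there are a sequence of locally finite
partitions of unity and families of points of `D` such that points attached to the supports
containing `x` converge to `x` uniformly in the index, in the sense of condition (3). -/
def IsStrongPPSpace (X : Type*) [TopologicalSpace X] : Prop :=
  ∀ D : Set X, Dense D →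
    ∃ (I : ℕ → Type u) (φ : ∀ n, I n → X → ℝ) (p : ∀ n, I n → X),
      (∀ n, IsLocFinPartitionOfUnity (φ n)) ∧ (∀ n i, p n i ∈ D) ∧
      ∀ x : X, ∀ U ∈ nhds x, ∃ n₀ : ℕ, ∀ n ≥ n₀, ∀ i : I n,
        x ∈ closure (Function.support (φ n i)) → p n i ∈ U

/-- A zero set: the preimage of `{0}` under a continuous function `X → [0,1]`. -/
def IsZeroSet {X : Type*} [TopologicalSpace X] (A : Set X) : Prop :=
  ∃ f : X → ℝ, Continuous f ∧ (∀ x, f x ∈ Set.Icc (0 : ℝ) 1) ∧ A = f ⁻¹' {0}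

/-- A cozero set: the preimage of `(0,1]` under a continuous function `X → [0,1]`. -/
def IsCozeroSet {X : Type*} [TopologicalSpace X] (A : Set X) : Prop :=
  ∃ f : X → ℝ, Continuous f ∧ (∀ x, f x ∈ Set.Icc (0 : ℝ) 1) ∧ A = f ⁻¹' Set.Ioc (0 : ℝ) 1

/-- A functionally ambiguous set: simultaneously a countable union of zero sets and a
countable intersection of cozero sets. -/
def IsFunctionallyAmbiguous {X : Type*} [TopologicalSpace X] (A : Set X) : Prop :=
  (∃ F : ℕ → Set X, (∀ n, IsZeroSet (F n)) ∧ A = ⋃ n, F n) ∧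
    ∃ B : ℕ → Set X, (∀ n, IsCozeroSet (B n)) ∧ A = ⋂ n, B n

/-- A discrete family of sets: every point has a neighborhood meeting at most one member. -/
def IsDiscreteFamily {I X : Type*} [TopologicalSpace X] (A : I → Set X) : Prop :=
  ∀ x : X, ∃ U ∈ nhds x, {i : I | (U ∩ A i).Nonempty}.Subsingleton

/-- Weakly collectionwise normal: every discrete family of zero sets can be separated by a
discrete family of cozero sets. -/
def WeaklyCollectionwiseNormal (X : Type*) [TopologicalSpace X] : Prop :=
  ∀ (S : Type u) (F : S → Set X), (∀ s, IsZeroSet (F s)) → IsDiscreteFamily F →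
    ∃ U : S → Set X, (∀ s, IsCozeroSet (U s)) ∧ IsDiscreteFamily U ∧ ∀ s, F s ⊆ U s

/-- A contracting structure on `Z`: a continuous `γ : Z × [0,1] → Z` with `γ(z,0) = z` and
`γ(z,1) = z₀`. -/
structure IsContracting {Z : Type*} [TopologicalSpace Z] (γ : Z → ℝ → Z) (z₀ : Z) :
    Prop where
  continuousOn : ContinuousOn (fun p : Z × ℝ => γ p.1 p.2) (Set.univ ×ˢ Set.Icc (0 : ℝ) 1)
  map_zero : ∀ z : Z, γ z 0 = z
  map_one : ∀ z : Z, γ z 1 = z₀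

namespace RZT

/-- clamp a real number into `[0,1]`. -/
noncomputable def clampI (t : ℝ) : ℝ := max 0 (min 1 t)

lemma clampI_mem (t : ℝ) : clampI t ∈ Set.Icc (0:ℝ) 1 :=
  ⟨le_max_left _ _, max_le zero_le_one (min_le_left _ _)⟩

lemma clampI_zero : clampI 0 = 0 := by simp [clampI]

lemma clampI_one : clampI 1 = 1 := by simp [clampI]

lemma clampI_idem (t : ℝ) : clampI (clampI t) = clampI t := by
  rcases clampI_mem t with ⟨h0, h1⟩
  simp [clampI, min_eq_right h1, max_eq_right h0]

lemma continuous_clampI : Continuous clampI :=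
  continuous_const.max (continuous_const.min continuous_id)

variable {Z : Type*} [TopologicalSpace Z] {lam : Z → Z → ℝ → Z}

/-- The clamped equiconnecting map, continuous everywhere. -/
noncomputable def mu (lam : Z → Z → ℝ → Z) (x y : Z) (t : ℝ) : Z := lam x y (clampI t)

lemma mu_continuous (hlam : IsEquiconnecting lam) :
    Continuous fun p : Z × Z × ℝ => mu lam p.1 p.2.1 p.2.2 := by
  have h : Continuous fun p : Z × Z × ℝ => (p.1, p.2.1, clampI p.2.2) :=
    continuous_fst.prodMk ((continuous_fst.comp continuous_snd).prodMk
      (continuous_clampI.comp (continuous_snd.comp continuous_snd)))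
  exact hlam.continuousOn.comp_continuous h fun p =>
    ⟨mem_univ _, mem_univ _, clampI_mem _⟩

lemma mu_zero (hlam : IsEquiconnecting lam) (x y : Z) : mu lam x y 0 = x := by
  rw [mu, clampI_zero, hlam.map_zero]

lemma mu_one (hlam : IsEquiconnecting lam) (x y : Z) : mu lam x y 1 = y := by
  rw [mu, clampI_one, hlam.map_one]

lemma mu_clampI (x y : Z) (t : ℝ) : mu lam x y (clampI t) = mu lam x y t := by
  rw [mu, mu, clampI_idem]

lemma mu_mem_iterSet (hlam : IsEquiconnecting lam) {V : Set Z} {x y : Z} {m : ℕ}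
    (hx : x ∈ lambdaIterSet lam V m) (hy : y ∈ V) (t : ℝ) :
    mu lam x y t ∈ lambdaIterSet lam V (m + 1) :=
  ⟨(x, y, clampI t), ⟨hx, hy, clampI_mem t⟩, rfl⟩

/-- The iterated combination of a weighted list of points. -/
noncomputable def combL (lam : Z → Z → ℝ → Z) (z₀ : Z) : List (Z × ℝ) → Z
  | [] => z₀
  | [p] => p.1
  | p :: q :: L =>
      if 0 < p.2 + q.2 then
        combL lam z₀ ((mu lam p.1 q.1 (q.2 / (p.2 + q.2)), p.2 + q.2) :: L)
      else combL lam z₀ (q :: L)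
termination_by l => l.length

@[simp] lemma combL_nil (z₀ : Z) : combL lam z₀ [] = z₀ := by rw [combL]

@[simp] lemma combL_single (z₀ : Z) (p : Z × ℝ) : combL lam z₀ [p] = p.1 := by rw [combL]

lemma combL_cons_cons (z₀ : Z) (p q : Z × ℝ) (L : List (Z × ℝ)) :
    combL lam z₀ (p :: q :: L) =
      if 0 < p.2 + q.2 then
        combL lam z₀ ((mu lam p.1 q.1 (q.2 / (p.2 + q.2)), p.2 + q.2) :: L)
      else combL lam z₀ (q :: L) := by
  rw [combL]

/-- Dropping a zero-weight head does not change the combination. -/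
lemma combL_drop_zero (hlam : IsEquiconnecting lam) (z₀ : Z) (z : Z) (q : Z × ℝ)
    (L : List (Z × ℝ)) : combL lam z₀ ((z, 0) :: q :: L) = combL lam z₀ (q :: L) := by
  rw [combL_cons_cons]
  by_cases h : 0 < (0:ℝ) + q.2
  · rw [if_pos h]
    have hq2 : q.2 ≠ 0 := by
      intro h0; rw [h0] at h; simp at h
    rw [zero_add, div_self hq2, mu_one hlam, Prod.mk.eta]
  · rw [if_neg h]

/-- The value of a combination lies in an iterate of `V` as long as all points are in `V`. -/
lemma combL_mem_iterSet (hlam : IsEquiconnecting lam) (z₀ : Z) {V : Set Z} :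
    ∀ (L : List (Z × ℝ)) (z0 : Z) (a0 : ℝ) (m : ℕ), z0 ∈ lambdaIterSet lam V m →
      (∀ p ∈ L, p.1 ∈ V) → ∃ m', combL lam z₀ ((z0, a0) :: L) ∈ lambdaIterSet lam V m'
  | [], z0, a0, m, hz0, _ => ⟨m, by simpa using hz0⟩
  | q :: L, z0, a0, m, hz0, hL => by
    rw [combL_cons_cons]
    by_cases h : 0 < a0 + q.2
    · rw [if_pos h]
      exact combL_mem_iterSet hlam z₀ L _ _ (m + 1)
        (mu_mem_iterSet hlam hz0 (hL q (List.mem_cons_self)) _)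
        fun p hp => hL p (List.mem_cons_of_mem _ hp)
    · rw [if_neg h]
      rcases q with ⟨z1, a1⟩
      exact combL_mem_iterSet hlam z₀ L z1 a1 0 (hL _ (List.mem_cons_self))
        fun p hp => hL p (List.mem_cons_of_mem _ hp)

/-- Removing all non-positive-weight entries does not change the combination, provided all
weights are nonnegative and at least one is positive. -/
lemma combL_filter_pos (hlam : IsEquiconnecting lam) (z₀ : Z) :
    ∀ (L : List (Z × ℝ)), (∀ p ∈ L, 0 ≤ p.2) →
      (L.filter fun p => decide (0 < p.2)) ≠ [] →
      combL lam z₀ L = combL lam z₀ (L.filter fun p => decide (0 < p.2))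
  | [], _, hne => absurd rfl hne
  | [p], hnn, hne => by
    have hp : 0 < p.2 := by
      by_contra hp
      simp [List.filter, hp] at hne
    simp [List.filter, hp]
  | p :: q :: L, hnn, hne => by
    have hp0 : 0 ≤ p.2 := hnn p (List.mem_cons_self)
    have hq0 : 0 ≤ q.2 := hnn q (List.mem_cons_of_mem _ (List.mem_cons_self))
    have hL0 : ∀ r ∈ L, 0 ≤ r.2 := fun r hr =>
      hnn r (List.mem_cons_of_mem _ (List.mem_cons_of_mem _ hr))
    rw [combL_cons_cons]
    by_cases h : 0 < p.2 + q.2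
    · rw [if_pos h]
      rcases eq_or_lt_of_le hp0 with hp | hp
      · -- p.2 = 0, hence q.2 > 0
        replace hp : p.2 = 0 := hp.symm
        have hq : 0 < q.2 := by
          rcases eq_or_lt_of_le hq0 with hq | hq
          · exfalso; rw [hp, ← hq] at h; simp at h
          · exact hq
        have ht : q.2 / (p.2 + q.2) = 1 := by
          rw [hp, zero_add, div_self hq.ne']
        have hw : p.2 + q.2 = q.2 := by rw [hp, zero_add]
        have hfil : (p :: q :: L).filter (fun p => decide (0 < p.2)) =
            q :: L.filter (fun p => decide (0 < p.2)) := by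
          simp [List.filter, hp, hq]
        rw [ht, mu_one hlam, hw, hfil, Prod.mk.eta]
        have := combL_filter_pos hlam z₀ (q :: L)
          (fun r hr => hnn r (List.mem_cons_of_mem _ hr))
          (by simpa [List.filter, hq] using List.cons_ne_nil _ _)
        rw [this]
        simp [List.filter, hq]
      · rcases eq_or_lt_of_le hq0 with hq | hq
        · -- q.2 = 0
          replace hq : q.2 = 0 := hq.symm
          have ht : q.2 / (p.2 + q.2) = 0 := by rw [hq]; simp
          have hw : p.2 + q.2 = p.2 := by rw [hq, add_zero]
          have hfil : (p :: q :: L).filter (fun p => decide (0 < p.2)) =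
              p :: L.filter (fun p => decide (0 < p.2)) := by
            simp [List.filter, hp, hq]
          rw [ht, mu_zero hlam, hw, hfil, Prod.mk.eta]
          have := combL_filter_pos hlam z₀ (p :: L)
            (by
              intro r hr
              rcases List.mem_cons.1 hr with h' | h'
              · rw [h']; exact hp0
              · exact hL0 r h')
            (by simpa [List.filter, hp] using List.cons_ne_nil _ _)
          rw [this]
          simp [List.filter, hp]
        · -- both positive
          have hfil : (p :: q :: L).filter (fun p => decide (0 < p.2)) =
              p :: q :: L.filter (fun p => decide (0 < p.2)) := by
            simp [List.filter, hp, hq]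
          rw [hfil, combL_cons_cons, if_pos h]
          have := combL_filter_pos hlam z₀
            ((mu lam p.1 q.1 (q.2 / (p.2 + q.2)), p.2 + q.2) :: L)
            (by
              intro r hr
              rcases List.mem_cons.1 hr with h' | h'
              · rw [h']; exact h.le
              · exact hL0 r h')
            (by simpa [List.filter, h] using List.cons_ne_nil _ _)
          rw [this]
          simp [List.filter, h]
    · -- p.2 = q.2 = 0
      rw [if_neg h]
      have hp : p.2 = 0 := le_antisymm (by nlinarith) hp0
      have hq : q.2 = 0 := le_antisymm (by nlinarith) hq0
      have hfil : (p :: q :: L).filter (fun p => decide (0 < p.2)) =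
          (q :: L).filter (fun p => decide (0 < p.2)) := by
        simp [List.filter, hp]
      rw [hfil]
      exact combL_filter_pos hlam z₀ (q :: L)
        (fun r hr => hnn r (List.mem_cons_of_mem _ hr))
        (by rw [← hfil]; exact hne)
termination_by L => L.length


/-- The generalized tube lemma for a triple product. -/
lemma tube3 {K₁ K₂ : Set Z} {K₃ : Set ℝ} (h₁ : IsCompact K₁) (h₂ : IsCompact K₂)
    (h₃ : IsCompact K₃) {G : Z × Z × ℝ → Z} (hG : Continuous G) {O : Set Z} (hO : IsOpen O)
    (him : ∀ a ∈ K₁, ∀ b ∈ K₂, ∀ t ∈ K₃, G (a, b, t) ∈ O) :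
    ∃ O₁ O₂ O₃, IsOpen O₁ ∧ IsOpen O₂ ∧ IsOpen O₃ ∧ K₁ ⊆ O₁ ∧ K₂ ⊆ O₂ ∧ K₃ ⊆ O₃ ∧
      ∀ a ∈ O₁, ∀ b ∈ O₂, ∀ t ∈ O₃, G (a, b, t) ∈ O := by
  have hsub : K₁ ×ˢ (K₂ ×ˢ K₃) ⊆ G ⁻¹' O := by
    rintro ⟨a, b, t⟩ ⟨ha, hb, ht⟩
    exact him a ha b hb t ht
  obtain ⟨u, v, hu, hv, hK₁u, hK₂₃v, huv⟩ :=
    generalized_tube_lemma h₁ (h₂.prod h₃) (hO.preimage hG) hsub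
  obtain ⟨u₂, v₂, hu₂, hv₂, hK₂u₂, hK₃v₂, huv₂⟩ :=
    generalized_tube_lemma h₂ h₃ hv hK₂₃v
  refine ⟨u, u₂, v₂, hu, hu₂, hv₂, hK₁u, hK₂u₂, hK₃v₂, ?_⟩
  intro a ha b hb t ht
  exact huv (Set.mk_mem_prod ha (huv₂ (Set.mk_mem_prod hb ht)))

/-- Tube lemma specialized to `mu` over the full parameter interval. -/
lemma tube3_mu (hlam : IsEquiconnecting lam) {K₁ K₂ : Set Z} (h₁ : IsCompact K₁)
    (h₂ : IsCompact K₂) {O : Set Z} (hO : IsOpen O)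
    (him : ∀ a ∈ K₁, ∀ b ∈ K₂, ∀ t ∈ Set.Icc (0:ℝ) 1, mu lam a b t ∈ O) :
    ∃ O₁ O₂, IsOpen O₁ ∧ IsOpen O₂ ∧ K₁ ⊆ O₁ ∧ K₂ ⊆ O₂ ∧
      ∀ a ∈ O₁, ∀ b ∈ O₂, ∀ t : ℝ, mu lam a b t ∈ O := by
  obtain ⟨O₁, O₂, O₃, ho₁, ho₂, ho₃, hs₁, hs₂, hs₃, hprop⟩ :=
    tube3 h₁ h₂ isCompact_Icc (mu_continuous hlam) hO him
  refine ⟨O₁, O₂, ho₁, ho₂, hs₁, hs₂, ?_⟩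
  intro a ha b hb t
  have : mu lam a b (clampI t) ∈ O := hprop a ha b hb (clampI t) (hs₃ (clampI_mem t))
  rwa [mu_clampI] at this

section Main

variable {W : Type*} [TopologicalSpace W]

/-- The main continuity lemma for `combL` with functional entries, together with the
uniform version for a free head point ranging over a compact set. -/
theorem combL_main (hlam : IsEquiconnecting lam) (z₀ : Z) :
    ∀ (P : List ((W → Z) × (W → ℝ))) (S : Set W) (σ : W → ℝ),
      (∀ p ∈ P, ContinuousOn p.1 S) → (∀ p ∈ P, ContinuousOn p.2 S) →
      (∀ w ∈ S, ∀ p ∈ P, 0 ≤ p.2 w) → ContinuousOn σ S → (∀ w ∈ S, 0 ≤ σ w) →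
      (∀ w ∈ S, σ w + (P.map fun p => p.2 w).sum = 1) →
      ContinuousOn
        (fun q : Z × W => combL lam z₀ ((q.1, σ q.2) :: P.map fun p => (p.1 q.2, p.2 q.2)))
        (Set.univ ×ˢ S) ∧
      ∀ w0 ∈ S, σ w0 = 0 → ∀ K : Set Z, IsCompact K →
        ∀ U ∈ 𝓝 (combL lam z₀ (P.map fun p => (p.1 w0, p.2 w0))),
        ∃ O, IsOpen O ∧ K ⊆ O ∧ ∃ N ∈ 𝓝[S] w0, N ⊆ S ∧
          ∀ ζ ∈ O, ∀ w ∈ N,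
            combL lam z₀ ((ζ, σ w) :: P.map fun p => (p.1 w, p.2 w)) ∈ U := by
  intro P
  induction P with
  | nil =>
    intro S σ hc1 hc2 hnn hσc hσnn hsum
    constructor
    · have heq : (fun q : Z × W =>
          combL lam z₀ ((q.1, σ q.2) :: ([] : List ((W → Z) × (W → ℝ))).map
            fun p => (p.1 q.2, p.2 q.2))) = fun q : Z × W => q.1 := by
        funext q
        simp
      rw [heq]
      exact continuous_fst.continuousOn
    · intro w0 hw0 hσ0 K hK U hU
      have := hsum w0 hw0
      rw [hσ0] at this
      simp at this
  | cons p₁ P' IH =>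
    intro S σ hc1 hc2 hnn hσc hσnn hsum
    have hzfc : ContinuousOn p₁.1 S := hc1 p₁ (List.mem_cons_self)
    have hafc : ContinuousOn p₁.2 S := hc2 p₁ (List.mem_cons_self)
    have haf_nn : ∀ w ∈ S, 0 ≤ p₁.2 w := fun w hw => hnn w hw p₁ (List.mem_cons_self)
    set σ' : W → ℝ := fun w => σ w + p₁.2 w with hσ'def
    have hσ'c : ContinuousOn σ' S := hσc.add hafc
    have hσ'nn : ∀ w ∈ S, 0 ≤ σ' w := fun w hw => add_nonneg (hσnn w hw) (haf_nn w hw)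
    have hsum' : ∀ w ∈ S, σ' w + (P'.map fun p => p.2 w).sum = 1 := by
      intro w hw
      have := hsum w hw
      simp only [List.map_cons, List.sum_cons] at this
      simp only [hσ'def]
      linarith
    obtain ⟨IHa, IHb⟩ := IH S σ' (fun p hp => hc1 p (List.mem_cons_of_mem _ hp))
      (fun p hp => hc2 p (List.mem_cons_of_mem _ hp))
      (fun w hw p hp => hnn w hw p (List.mem_cons_of_mem _ hp)) hσ'c hσ'nn hsum'
    have hevalpos : ∀ (ζ : Z) (w : W), 0 < σ w + p₁.2 w →
        combL lam z₀ ((ζ, σ w) :: (p₁ :: P').map fun p => (p.1 w, p.2 w)) =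
          combL lam z₀ ((mu lam ζ (p₁.1 w) (p₁.2 w / (σ w + p₁.2 w)), σ' w) ::
            P'.map fun p => (p.1 w, p.2 w)) := by
      intro ζ w h
      rw [List.map_cons, combL_cons_cons, if_pos h]
    have hevalneg : ∀ (ζ : Z) (w : W), ¬ 0 < σ w + p₁.2 w →
        combL lam z₀ ((ζ, σ w) :: (p₁ :: P').map fun p => (p.1 w, p.2 w)) =
          combL lam z₀ ((p₁.1 w, p₁.2 w) :: P'.map fun p => (p.1 w, p.2 w)) := by
      intro ζ w h
      rw [List.map_cons, combL_cons_cons, if_neg h]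
    constructor
    · -- part (a) : joint continuity
      rintro ⟨ζ0, w0⟩ hq
      have hw0 : w0 ∈ S := hq.2
      by_cases hpos : 0 < σ w0 + p₁.2 w0
      · set S'' : Set W := S ∩ {w | 0 < σ w + p₁.2 w} with hS''def
        have hS''mem : S'' ∈ 𝓝[S] w0 := by
          have h1 : ∀ᶠ w in 𝓝[S] w0, 0 < σ w + p₁.2 w :=
            Filter.Tendsto.eventually ((hσc w0 hw0).add (hafc w0 hw0))
              (eventually_gt_nhds hpos)
          exact Filter.inter_mem self_mem_nhdsWithin h1
        have hratio : ContinuousOn (fun w => p₁.2 w / (σ w + p₁.2 w)) S'' :=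
          ContinuousOn.div (hafc.mono inter_subset_left)
            ((hσc.add hafc).mono inter_subset_left) (fun w hw => ne_of_gt hw.2)
        have hΨ : ContinuousOn (fun q : Z × W =>
            ((mu lam q.1 (p₁.1 q.2) (p₁.2 q.2 / (σ q.2 + p₁.2 q.2)), q.2) : Z × W))
            (Set.univ ×ˢ S'') := by
          apply ContinuousOn.prodMk
          · have hinner : ContinuousOn (fun q : Z × W =>
                (q.1, p₁.1 q.2, p₁.2 q.2 / (σ q.2 + p₁.2 q.2))) (Set.univ ×ˢ S'') := by
              apply ContinuousOn.prodMk continuous_fst.continuousOn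
              apply ContinuousOn.prodMk
              · exact (hzfc.mono inter_subset_left).comp continuous_snd.continuousOn
                  (fun q hq => hq.2)
              · exact hratio.comp continuous_snd.continuousOn (fun q hq => hq.2)
            exact (mu_continuous hlam).comp_continuousOn hinner
          · exact continuous_snd.continuousOn
        have hcomp := IHa.comp hΨ (fun q hq => ⟨mem_univ _, hq.2.1⟩)
        have hcw : ContinuousWithinAt
            (fun q : Z × W =>
              combL lam z₀ ((q.1, σ q.2) :: (p₁ :: P').map fun p => (p.1 q.2, p.2 q.2)))
            (Set.univ ×ˢ S'') (ζ0, w0) := by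
          refine (hcomp (ζ0, w0) ⟨mem_univ _, hw0, hpos⟩).congr ?_ ?_
          · intro q hq
            rw [hevalpos q.1 q.2 hq.2.2]
            rfl
          · rw [hevalpos ζ0 w0 hpos]
            rfl
        refine Filter.Tendsto.mono_left hcw (nhdsWithin_le_of_mem ?_)
        rw [nhdsWithin_prod_eq]
        refine Filter.prod_mem_prod ?_ hS''mem
        rw [nhdsWithin_univ]
        exact Filter.univ_mem
      · have hσ0 : σ w0 = 0 := by
          have := hσnn w0 hw0; have := haf_nn w0 hw0; push_neg at hpos; linarith
        have ha0 : p₁.2 w0 = 0 := by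
          have := hσnn w0 hw0; have := haf_nn w0 hw0; push_neg at hpos; linarith
        have hσ'0 : σ' w0 = 0 := by simp only [hσ'def]; rw [hσ0, ha0, add_zero]
        have hsum'0 : (P'.map fun p => p.2 w0).sum = 1 := by
          have := hsum' w0 hw0; rw [hσ'0] at this; linarith
        have hP'ne : P' ≠ [] := by rintro rfl; simp at hsum'0
        obtain ⟨p₂, P'', hP'⟩ := List.exists_cons_of_ne_nil hP'ne
        have hval : combL lam z₀
            ((ζ0, σ w0) :: (p₁ :: P').map fun p => (p.1 w0, p.2 w0)) =
            combL lam z₀ (P'.map fun p => (p.1 w0, p.2 w0)) := by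
          rw [hevalneg ζ0 w0 hpos, ha0, hP', List.map_cons, combL_drop_zero hlam]
        have key : ∀ U ∈ 𝓝 (combL lam z₀ (P'.map fun p => (p.1 w0, p.2 w0))),
            ∀ᶠ q in 𝓝[Set.univ ×ˢ S] ((ζ0, w0) : Z × W),
              combL lam z₀ ((q.1, σ q.2) :: (p₁ :: P').map fun p => (p.1 q.2, p.2 q.2)) ∈ U := by
          intro U hU
          set K : Set Z := ((fun r : Z × Z × ℝ => mu lam r.1 r.2.1 r.2.2) ''
              ({ζ0} ×ˢ {p₁.1 w0} ×ˢ Set.Icc (0:ℝ) 1)) ∪ {p₁.1 w0} with hKdef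
          have hK : IsCompact K :=
            ((isCompact_singleton.prod (isCompact_singleton.prod isCompact_Icc)).image
              (mu_continuous hlam)).union isCompact_singleton
          obtain ⟨O', hO'o, hKO', N', hN'm, hN'S, hprop⟩ := IHb w0 hw0 hσ'0 K hK U hU
          obtain ⟨O₁, O₂, ho₁, ho₂, hKO₁, hKO₂, hmu⟩ :=
            tube3_mu hlam isCompact_singleton isCompact_singleton hO'o
              (fun a ha b hb t ht => hKO'
                (Or.inl ⟨(a, b, t), ⟨ha, hb, ht⟩, rfl⟩))
          have hN : N' ∩ p₁.1 ⁻¹' (O₂ ∩ O') ∈ 𝓝[S] w0 :=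
            Filter.inter_mem hN'm ((hzfc w0 hw0).preimage_mem_nhdsWithin
              ((ho₂.inter hO'o).mem_nhds ⟨hKO₂ rfl, hKO' (Or.inr rfl)⟩))
          have hmem : O₁ ×ˢ (N' ∩ p₁.1 ⁻¹' (O₂ ∩ O')) ∈ 𝓝 ζ0 ×ˢ 𝓝[S] w0 :=
            Filter.prod_mem_prod (ho₁.mem_nhds (hKO₁ rfl)) hN
          rw [nhdsWithin_prod_eq, nhdsWithin_univ]
          apply Filter.mem_of_superset hmem
          rintro ⟨ζ, w⟩ ⟨hζ, hwN', hwpre⟩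
          show combL lam z₀ ((ζ, σ w) :: (p₁ :: P').map fun p => (p.1 w, p.2 w)) ∈ U
          have hwS : w ∈ S := hN'S hwN'
          by_cases hp : 0 < σ w + p₁.2 w
          · rw [hevalpos ζ w hp]
            exact hprop _ (hmu ζ hζ (p₁.1 w) hwpre.1 _) w hwN'
          · have haw : p₁.2 w = 0 := by
              have := hσnn w hwS; have := haf_nn w hwS; push_neg at hp; linarith
            have hσw : σ' w = p₁.2 w := by
              simp only [hσ'def]
              have := hσnn w hwS; have := haf_nn w hwS; push_neg at hp; linarith
            rw [hevalneg ζ w hp, ← hσw]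
            exact hprop _ hwpre.2 w hwN'
        have hTend : Filter.Tendsto
            (fun q : Z × W =>
              combL lam z₀ ((q.1, σ q.2) :: (p₁ :: P').map fun p => (p.1 q.2, p.2 q.2)))
            (𝓝[Set.univ ×ˢ S] ((ζ0, w0) : Z × W))
            (𝓝 (combL lam z₀ (P'.map fun p => (p.1 w0, p.2 w0)))) :=
          Filter.tendsto_def.2 fun U hU => key U hU
        rwa [← hval] at hTend
    · -- part (b) : uniform continuity over a compact head set
      intro w0 hw0 hσ0 K hK U hU
      by_cases haf0 : 0 < p₁.2 w0
      · have hσ'v : σ' w0 = p₁.2 w0 := by simp only [hσ'def]; rw [hσ0, zero_add]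
        have hcw : ContinuousWithinAt
            (fun q : Z × W =>
              combL lam z₀ ((q.1, σ' q.2) :: P'.map fun p => (p.1 q.2, p.2 q.2)))
            (Set.univ ×ˢ S) ((p₁.1 w0, w0) : Z × W) := IHa _ ⟨mem_univ _, hw0⟩
        have hval0 : combL lam z₀ ((p₁.1 w0, σ' w0) :: P'.map fun p => (p.1 w0, p.2 w0)) =
            combL lam z₀ ((p₁ :: P').map fun p => (p.1 w0, p.2 w0)) := by
          rw [hσ'v, List.map_cons]
        have hT : Filter.Tendsto
            (fun q : Z × W =>
              combL lam z₀ ((q.1, σ' q.2) :: P'.map fun p => (p.1 q.2, p.2 q.2)))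
            (𝓝 (p₁.1 w0) ×ˢ 𝓝[S] w0)
            (𝓝 (combL lam z₀ ((p₁ :: P').map fun p => (p.1 w0, p.2 w0)))) := by
          have h2 := hcw
          rw [ContinuousWithinAt] at h2
          rw [nhdsWithin_prod_eq, nhdsWithin_univ] at h2
          rwa [hval0] at h2
        have hpre : (fun q : Z × W =>
            combL lam z₀ ((q.1, σ' q.2) :: P'.map fun p => (p.1 q.2, p.2 q.2))) ⁻¹' U ∈
            𝓝 (p₁.1 w0) ×ˢ 𝓝[S] w0 := Filter.tendsto_def.1 hT U hU
        obtain ⟨W₀, hW₀, N', hN', hsubW⟩ := Filter.mem_prod_iff.1 hpre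
        obtain ⟨W₀', hW₀'sub, hW₀'o, hW₀'mem⟩ := mem_nhds_iff.1 hW₀
        obtain ⟨O, O₂, O₃, hOo, hO₂o, hO₃o, hKO, hzO₂, h1O₃, hmu⟩ :=
          tube3 hK isCompact_singleton isCompact_singleton (mu_continuous hlam) hW₀'o
            (fun a _ b hb t ht => by
              rw [mem_singleton_iff] at hb ht
              rw [hb, ht]
              show mu lam a (p₁.1 w0) 1 ∈ W₀'
              rw [mu_one hlam]
              exact hW₀'mem)
        obtain ⟨δ₁, hδ₁, hδsub⟩ := Metric.mem_nhds_iff.1 (hO₃o.mem_nhds (h1O₃ rfl))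
        set c := p₁.2 w0 with hcdef
        have hev1 : ∀ᶠ w in 𝓝[S] w0, c / 2 < p₁.2 w :=
          Filter.Tendsto.eventually (hafc w0 hw0) (eventually_gt_nhds (by linarith))
        have hev2 : ∀ᶠ w in 𝓝[S] w0, σ w < δ₁ * (c / 2) :=
          Filter.Tendsto.eventually (hσc w0 hw0)
            (eventually_lt_nhds (by rw [hσ0]; positivity))
        have hev3 : p₁.1 ⁻¹' O₂ ∈ 𝓝[S] w0 :=
          (hzfc w0 hw0).preimage_mem_nhdsWithin (hO₂o.mem_nhds (hzO₂ rfl))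
        refine ⟨O, hOo, hKO,
          (N' ∩ S ∩ p₁.1 ⁻¹' O₂) ∩ ({w | c / 2 < p₁.2 w} ∩ {w | σ w < δ₁ * (c / 2)}),
          Filter.inter_mem (Filter.inter_mem (Filter.inter_mem hN' self_mem_nhdsWithin) hev3)
            (Filter.inter_mem hev1 hev2),
          fun w hw => hw.1.1.2, ?_⟩
        rintro ζ hζ w ⟨⟨⟨hwN', hwS⟩, hwO₂⟩, hwc, hwσ⟩
        simp only [Set.mem_setOf_eq] at hwc hwσ
        have hc2 : (0:ℝ) < c / 2 := by linarith
        have hafw : 0 < p₁.2 w := lt_trans hc2 hwc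
        have hσw : 0 ≤ σ w := hσnn w hwS
        have hs : 0 < σ w + p₁.2 w := by linarith
        rw [hevalpos ζ w hs]
        set t := p₁.2 w / (σ w + p₁.2 w) with htdef
        have ht1 : t ≤ 1 := by
          rw [htdef, div_le_one hs]; linarith
        have ht2 : 1 - δ₁ < t := by
          have h1t : 1 - t = σ w / (σ w + p₁.2 w) := by
            rw [htdef]; field_simp; ring
          have hlt : σ w / (σ w + p₁.2 w) < δ₁ := by
            rw [div_lt_iff₀ hs]
            have hmono : δ₁ * (c / 2) ≤ δ₁ * (σ w + p₁.2 w) :=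
              mul_le_mul_of_nonneg_left (by linarith) hδ₁.le
            linarith
          linarith
        have htO₃ : t ∈ O₃ := hδsub (by
          rw [Real.ball_eq_Ioo]
          exact ⟨by linarith, by linarith⟩)
        have hmuW : mu lam ζ (p₁.1 w) t ∈ W₀' := hmu ζ hζ (p₁.1 w) hwO₂ t htO₃
        exact hsubW (Set.mk_mem_prod (hW₀'sub hmuW) hwN')
      · have ha0 : p₁.2 w0 = 0 := le_antisymm (not_lt.1 haf0) (haf_nn w0 hw0)
        have hσ'0 : σ' w0 = 0 := by simp only [hσ'def]; rw [hσ0, ha0, add_zero]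
        have hsum'0 : (P'.map fun p => p.2 w0).sum = 1 := by
          have := hsum' w0 hw0; rw [hσ'0] at this; linarith
        have hP'ne : P' ≠ [] := by rintro rfl; simp at hsum'0
        obtain ⟨p₂, P'', hP'⟩ := List.exists_cons_of_ne_nil hP'ne
        have hval : combL lam z₀ ((p₁ :: P').map fun p => (p.1 w0, p.2 w0)) =
            combL lam z₀ (P'.map fun p => (p.1 w0, p.2 w0)) := by
          rw [List.map_cons, ha0, hP', List.map_cons, combL_drop_zero hlam]
        set K'' : Set Z := ((fun r : Z × Z × ℝ => mu lam r.1 r.2.1 r.2.2) ''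
            (K ×ˢ {p₁.1 w0} ×ˢ Set.Icc (0:ℝ) 1)) ∪ {p₁.1 w0} with hK''def
        have hK'' : IsCompact K'' :=
          ((hK.prod (isCompact_singleton.prod isCompact_Icc)).image
            (mu_continuous hlam)).union isCompact_singleton
        obtain ⟨O', hO'o, hK''O', N', hN'm, hN'S, hprop⟩ :=
          IHb w0 hw0 hσ'0 K'' hK'' U (hval ▸ hU)
        obtain ⟨O, O₂, hOo, hO₂o, hKO, hzO₂, hmu⟩ :=
          tube3_mu hlam hK isCompact_singleton hO'o
            (fun a ha b hb t ht => hK''O' (Or.inl ⟨(a, b, t), ⟨ha, hb, ht⟩, rfl⟩))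
        have hN : N' ∩ p₁.1 ⁻¹' (O₂ ∩ O') ∈ 𝓝[S] w0 :=
          Filter.inter_mem hN'm ((hzfc w0 hw0).preimage_mem_nhdsWithin
            ((hO₂o.inter hO'o).mem_nhds ⟨hzO₂ rfl, hK''O' (Or.inr rfl)⟩))
        refine ⟨O, hOo, hKO, N' ∩ p₁.1 ⁻¹' (O₂ ∩ O'), hN, fun w hw => hN'S hw.1, ?_⟩
        rintro ζ hζ w ⟨hwN', hwpre⟩
        have hwS : w ∈ S := hN'S hwN'
        by_cases hp : 0 < σ w + p₁.2 w
        · rw [hevalpos ζ w hp]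
          exact hprop _ (hmu ζ hζ (p₁.1 w) hwpre.1 _) w hwN'
        · have hσw : σ' w = p₁.2 w := by
            simp only [hσ'def]
            have := hσnn w hwS; have := haf_nn w hwS; push_neg at hp; linarith
          rw [hevalneg ζ w hp, ← hσw]
          exact hprop _ hwpre.2 w hwN'

/-- Joint continuity of a `combL` combination of continuous functions with nonnegative
continuous weights summing to `1`. -/
theorem combL_continuousOn (hlam : IsEquiconnecting lam) (z₀ : Z)
    (P : List ((W → Z) × (W → ℝ))) (S : Set W)
    (hc1 : ∀ p ∈ P, ContinuousOn p.1 S) (hc2 : ∀ p ∈ P, ContinuousOn p.2 S)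
    (hnn : ∀ w ∈ S, ∀ p ∈ P, 0 ≤ p.2 w)
    (hsum : ∀ w ∈ S, (P.map fun p => p.2 w).sum = 1) :
    ContinuousOn (fun w => combL lam z₀ (P.map fun p => (p.1 w, p.2 w))) S := by
  rcases P with _ | ⟨p₁, P'⟩
  · intro w hw
    exact absurd (hsum w hw) (by simp)
  · have hmain := (combL_main hlam z₀ (p₁ :: P') S (fun _ => 0) hc1 hc2 hnn
      continuousOn_const (fun _ _ => le_refl _) (by
        intro w hw
        rw [zero_add]
        exact hsum w hw)).1
    have hemb : ContinuousOn (fun w : W => ((z₀, w) : Z × W)) S :=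
      (continuous_const.prodMk continuous_id).continuousOn
    have hcomp := hmain.comp hemb (fun w hw => ⟨mem_univ _, hw⟩)
    refine hcomp.congr ?_
    intro w _
    show combL lam z₀ ((p₁ :: P').map fun p => (p.1 w, p.2 w)) =
      combL lam z₀ ((z₀, (0:ℝ)) :: (p₁ :: P').map fun p => (p.1 w, p.2 w))
    rw [List.map_cons, combL_drop_zero hlam]

end Main


lemma iterSet_subset_infty (hlam : IsEquiconnecting lam) {V : Set Z} :
    ∀ m, lambdaIterSet lam V m ⊆ lambdaInftySet lam V
  | 0 => fun v hv => Set.mem_iUnion.2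
      ⟨0, ⟨(v, v, 0), ⟨hv, hv, le_refl 0, zero_le_one⟩, hlam.map_zero v v⟩⟩
  | m + 1 => fun v hv => Set.mem_iUnion.2 ⟨m, hv⟩

end RZT

open RZT

/-- If `X` is a metrizable space, `Y` a topological space and `(Z, λ)` a locally
convex equiconnected space, then every `f : X × Y → Z` which is continuous in the first
variable and has continuous `y`-sections for a dense set of `x`'s is a pointwise limit of a
sequence of continuous maps. -/
theorem rudin_zero_triple_of_metrizable {X Y Z : Type*} [TopologicalSpace X]
    [TopologicalSpace.MetrizableSpace X] [TopologicalSpace Y] [TopologicalSpace Z]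
    (lam : Z → Z → ℝ → Z) (hlam : IsEquiconnecting lam)
    (hconv : IsLocallyConvexEquiconnected lam)
    (f : X × Y → Z)
    (hsep : ∀ y : Y, Continuous fun x => f (x, y))
    (hdense : Dense {x : X | Continuous fun y => f (x, y)}) :
    ∃ g : ℕ → X × Y → Z, (∀ n, Continuous (g n)) ∧
      ∀ q : X × Y, Filter.Tendsto (fun n => g n q) Filter.atTop (nhds (f q)) := by
  classical
  by_cases hZE : Nonempty Z
  case neg =>
    have hempty : ∀ q : X × Y, False := fun q => hZE ⟨f q⟩
    exact ⟨fun _ => f,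
      fun n => continuous_iff_continuousAt.2 fun q => (hempty q).elim,
      fun q => (hempty q).elim⟩
  obtain ⟨z₀⟩ := hZE
  letI : MetricSpace X := TopologicalSpace.metrizableSpaceMetric X
  set D : Set X := {x : X | Continuous fun y => f (x, y)} with hDdef
  letI : LinearOrder ↥D := IsWellOrder.linearOrder WellOrderingRel
  have hcov : ∀ n : ℕ, (Set.univ : Set X) ⊆
      ⋃ d : ↥D, Metric.ball (d : X) (1 / ((n : ℝ) + 1)) := by
    intro n x _
    have hr : 0 < 1 / ((n : ℝ) + 1) := by positivity
    obtain ⟨d, hdD, hdx⟩ := hdense.exists_mem_open Metric.isOpen_ball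
      ⟨x, Metric.mem_ball_self hr⟩
    exact Set.mem_iUnion.2 ⟨⟨d, hdD⟩, by
      rw [Metric.mem_ball]
      rw [Metric.mem_ball] at hdx
      rwa [dist_comm]⟩
  have hpart : ∀ n : ℕ, ∃ pou : PartitionOfUnity ↥D X Set.univ,
      pou.IsSubordinate (fun d => Metric.ball (d : X) (1 / ((n : ℝ) + 1))) := fun n =>
    PartitionOfUnity.exists_isSubordinate isClosed_univ _
      (fun d => Metric.isOpen_ball) (hcov n)
  choose pou hsub using hpart
  have hfin : ∀ (n : ℕ) (x : X), {i : ↥D | pou n i x ≠ 0}.Finite := fun n x =>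
    (pou n).locallyFinite.point_finite x
  set L : ℕ → X → List ↥D := fun n x => ((hfin n x).toFinset.sort (· ≤ ·)) with hLdef
  set g : ℕ → X × Y → Z := fun n q =>
    combL lam z₀ ((L n q.1).map fun i : ↥D => (f (↑i, q.2), pou n i q.1)) with hgdef
  have hmemL : ∀ n x (i : ↥D), i ∈ L n x ↔ pou n i x ≠ 0 := by
    intro n x i
    simp only [hLdef, Finset.mem_sort, Set.Finite.mem_toFinset, Set.mem_setOf_eq]
  have hLne : ∀ n x, L n x ≠ [] := by
    intro n x h
    have hone := (pou n).sum_eq_one (Set.mem_univ x)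
    have hzero : ∀ i, pou n i x = 0 := by
      intro i
      by_contra hi
      have := (hmemL n x i).2 hi
      rw [h] at this
      exact absurd this List.not_mem_nil
    rw [finsum_eq_zero_of_forall_eq_zero hzero] at hone
    exact zero_ne_one hone
  refine ⟨g, ?_, ?_⟩
  · -- continuity of each g n
    intro n
    rw [continuous_iff_continuousAt]
    rintro ⟨x0, y0⟩
    obtain ⟨tset, htmem, htfin⟩ := (pou n).locallyFinite x0
    set N₀ := interior tset with hN₀
    have hx0 : x0 ∈ N₀ := mem_interior_iff_mem_nhds.2 htmem
    have hTfin : {i : ↥D | (support (pou n i) ∩ N₀).Nonempty}.Finite :=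
      htfin.subset fun i hi => hi.mono (inter_subset_inter_right _ interior_subset)
    set T : Finset ↥D := hTfin.toFinset with hT
    set Lfull : List ↥D := T.sort (· ≤ ·) with hLfull
    have hsupp_sub : ∀ x ∈ N₀, ∀ i : ↥D, pou n i x ≠ 0 → i ∈ T := by
      intro x hx i hi
      rw [hT, Set.Finite.mem_toFinset]
      exact ⟨x, hi, hx⟩
    have hLx : ∀ x ∈ N₀, L n x = Lfull.filter fun i => decide (0 < pou n i x) := by
      intro x hx
      have hnod1 : (L n x).Nodup := Finset.sort_nodup _ _
      have hnod2 : (Lfull.filter fun i => decide (0 < pou n i x)).Nodup :=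
        (Finset.sort_nodup _ _).filter _
      have hs1 : List.Pairwise (· < ·) (L n x) := (Finset.sortedLT_sort _).pairwise
      have hs2 : List.Pairwise (· < ·) (Lfull.filter fun i => decide (0 < pou n i x)) :=
        List.Pairwise.sublist List.filter_sublist (Finset.sortedLT_sort _).pairwise
      have hmm : ∀ i : ↥D, i ∈ L n x ↔
          i ∈ Lfull.filter fun i => decide (0 < pou n i x) := by
        intro i
        rw [hmemL, List.mem_filter, decide_eq_true_eq]
        constructor
        · intro hi
          have hpos : 0 < pou n i x := lt_of_le_of_ne ((pou n).nonneg i x) (Ne.symm hi)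
          exact ⟨(Finset.mem_sort _).2 (hsupp_sub x hx i hi), hpos⟩
        · rintro ⟨-, hpos⟩
          exact hpos.ne'
      have hperm : (L n x).Perm (Lfull.filter fun i => decide (0 < pou n i x)) :=
        List.perm_of_nodup_nodup_toFinset_eq hnod1 hnod2 (by
          ext i
          simp only [List.mem_toFinset]
          exact hmm i)
      haveI : IsAntisymm ↥D (· < ·) := ⟨fun a b h h' => absurd (h.trans h') (lt_irrefl a)⟩
      exact List.Perm.eq_of_pairwise (fun a b _ _ h h' => absurd (h.trans h') (lt_irrefl a)) hs1 hs2 hperm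
    have hsum1 : ∀ x ∈ N₀, (Lfull.map fun i => pou n i x).sum = 1 := by
      intro x hx
      have h1 : ∑ᶠ i, pou n i x = 1 := (pou n).sum_eq_one (Set.mem_univ x)
      have h2 : support (fun i : ↥D => pou n i x) ⊆ ↑T := fun i hi => hsupp_sub x hx i hi
      rw [finsum_eq_sum_of_support_subset _ h2] at h1
      calc (Lfull.map fun i => pou n i x).sum
          = (T.toList.map fun i => pou n i x).sum :=
            ((Finset.sort_perm_toList T (· ≤ ·)).map _).sum_eq
        _ = ∑ i ∈ T, pou n i x := Finset.sum_map_toList T _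
        _ = 1 := h1
    set P : List ((X × Y → Z) × (X × Y → ℝ)) := Lfull.map fun i : ↥D =>
      ((fun q : X × Y => f (↑i, q.2)), fun q : X × Y => pou n i q.1) with hP
    have hcP : ContinuousOn
        (fun q : X × Y => combL lam z₀ (P.map fun p => (p.1 q, p.2 q)))
        (N₀ ×ˢ (Set.univ : Set Y)) := by
      apply combL_continuousOn hlam z₀
      · intro p hp
        obtain ⟨i, -, rfl⟩ := List.mem_map.1 hp
        have hfi : Continuous fun y => f (↑i, y) := i.2
        exact (hfi.comp continuous_snd).continuousOn
      · intro p hp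
        obtain ⟨i, -, rfl⟩ := List.mem_map.1 hp
        exact ((pou n i).continuous.comp continuous_fst).continuousOn
      · intro q _ p hp
        obtain ⟨i, -, rfl⟩ := List.mem_map.1 hp
        exact (pou n).nonneg i q.1
      · intro q hq
        have hmapP : P.map (fun p => p.2 q) = Lfull.map fun i => pou n i q.1 := by
          rw [hP, List.map_map]
          rfl
        rw [hmapP]
        exact hsum1 q.1 hq.1
    have hagree : Set.EqOn (g n)
        (fun q : X × Y => combL lam z₀ (P.map fun p => (p.1 q, p.2 q)))
        (N₀ ×ˢ (Set.univ : Set Y)) := by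
      rintro ⟨x, y⟩ ⟨hx, -⟩
      show combL lam z₀ ((L n x).map fun i : ↥D => (f (↑i, y), pou n i x)) =
        combL lam z₀ (P.map fun p => (p.1 (x, y), p.2 (x, y)))
      have hmapP : P.map (fun p => (p.1 (x, y), p.2 (x, y))) =
          Lfull.map fun i : ↥D => (f (↑i, y), pou n i x) := by
        rw [hP, List.map_map]
        rfl
      rw [hmapP]
      have hnn' : ∀ p ∈ Lfull.map fun i : ↥D => (f (↑i, y), pou n i x), 0 ≤ p.2 := by
        intro p hp
        obtain ⟨i, -, rfl⟩ := List.mem_map.1 hp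
        exact (pou n).nonneg i x
      have hfilmap : ((Lfull.map fun i : ↥D => (f (↑i, y), pou n i x)).filter
          fun p => decide (0 < p.2)) =
          (Lfull.filter fun i => decide (0 < pou n i x)).map
            fun i : ↥D => (f (↑i, y), pou n i x) := by
        rw [List.filter_map]
        rfl
      have hne : ((Lfull.map fun i : ↥D => (f (↑i, y), pou n i x)).filter
          fun p => decide (0 < p.2)) ≠ [] := by
        rw [hfilmap, ← hLx x hx]
        intro h
        exact hLne n x (List.map_eq_nil_iff.1 h)
      rw [combL_filter_pos hlam z₀ _ hnn' hne, hfilmap, ← hLx x hx]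
    have hmemq : (N₀ ×ˢ (Set.univ : Set Y)) ∈ 𝓝 ((x0, y0) : X × Y) :=
      (isOpen_interior.prod isOpen_univ).mem_nhds ⟨hx0, Set.mem_univ _⟩
    exact (hcP.congr hagree).continuousAt hmemq
  · -- pointwise convergence
    rintro ⟨x, y⟩
    rw [Filter.tendsto_def]
    intro U hU
    obtain ⟨V, hV, hVU⟩ := hconv (f (x, y)) U hU
    have hcx : Filter.Tendsto (fun x' => f (x', y)) (𝓝 x) (𝓝 (f (x, y))) :=
      (hsep y).tendsto x
    have hpre : {x' | f (x', y) ∈ V} ∈ 𝓝 x := Filter.tendsto_def.1 hcx V hV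
    obtain ⟨ε, hε, hball⟩ := Metric.mem_nhds_iff.1 hpre
    obtain ⟨N, hN⟩ := exists_nat_one_div_lt hε
    rw [Filter.mem_atTop_sets]
    refine ⟨N, fun n hn => ?_⟩
    show g n (x, y) ∈ U
    have hpts : ∀ i ∈ L n x, f (↑i, y) ∈ V := by
      intro i hi
      have hne0 : pou n i x ≠ 0 := (hmemL n x i).1 hi
      have hxsupp : x ∈ tsupport (pou n i) := subset_closure hne0
      have hdist := hsub n i hxsupp
      rw [Metric.mem_ball] at hdist
      have hmono : 1 / ((n : ℝ) + 1) ≤ 1 / ((N : ℝ) + 1) := by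
        apply one_div_le_one_div_of_le (by positivity)
        have : (N : ℝ) ≤ (n : ℝ) := by exact_mod_cast hn
        linarith
      have hlt : dist (↑i : X) x < ε := by
        rw [dist_comm]
        linarith
      exact hball (Metric.mem_ball.2 hlt)
    obtain ⟨j, Ltl, hLcons⟩ := List.exists_cons_of_ne_nil (hLne n x)
    have hval : ∃ m', g n (x, y) ∈ lambdaIterSet lam V m' := by
      show ∃ m', combL lam z₀ ((L n x).map fun i : ↥D => (f (↑i, y), pou n i x)) ∈
        lambdaIterSet lam V m'
      rw [hLcons, List.map_cons]
      apply combL_mem_iterSet hlam z₀ _ _ _ 0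
      · show f (↑j, y) ∈ V
        exact hpts j (hLcons ▸ List.mem_cons_self)
      · intro p hp
        obtain ⟨i, hi, rfl⟩ := List.mem_map.1 hp
        exact hpts i (hLcons ▸ List.mem_cons_of_mem _ hi)
    obtain ⟨m', hm'⟩ := hval
    exact hVU (iterSet_subset_infty hlam m' hm')
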